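/- arXiv:2103.01400 — 3 statements merged into one kernel-verified Lean document; each statement's English description precedes it below -/
import Mathlib

section
/- Let ℓ : ℝ^d × ℝ^m → ℝ satisfy Assumption 1 with constants C_θθ and C_θx, where m = d. Fix x ∈ ℝ^d, ε > 0, and θ_min > 0, and define the L₂-optimal adversarial example x'(θ) = x − ε·θ/‖θ‖ for θ ≠ 0. Then for all θ₁, θ₂ ∈ ℝ^d with ‖θ₁‖ ≥ θ_min and ‖θ₂‖ ≥ θ_min, ‖∇_θ ℓ(x'(θ₁), θ₁) − ∇_θ ℓ(x'(θ₂), θ₂)‖ ≤ (C_θθ + ε·C_θx/θ_min)·‖θ₁ − θ₂‖; i.e., the gradient of the adversarial loss with L₂ constraint is (C_θθ + ε·C_θx/θ_min)-Lipschitz on the set {θ : ‖θ‖ ≥ θ_min}. -/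
lemma unit_lipschitz_aux {d : ℕ} (θmin : ℝ) (hθmin : 0 < θmin)
    (a b : EuclideanSpace ℝ (Fin d)) (ha : θmin ≤ ‖a‖) (hb : θmin ≤ ‖b‖) :
    θmin * ‖‖a‖⁻¹ • a - ‖b‖⁻¹ • b‖ ≤ ‖a - b‖ := by
  have ha0 : a ≠ 0 := by
    intro h; rw [h, norm_zero] at ha; linarith
  have hb0 : b ≠ 0 := by
    intro h; rw [h, norm_zero] at hb; linarith
  have hna : (0:ℝ) < ‖a‖ := lt_of_lt_of_le hθmin ha
  have hnb : (0:ℝ) < ‖b‖ := lt_of_lt_of_le hθmin hb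
  set u := ‖a‖⁻¹ • a with hu
  set v := ‖b‖⁻¹ • b with hv
  have hnu : ‖u‖ = 1 := norm_smul_inv_norm ha0
  have hnv : ‖v‖ = 1 := norm_smul_inv_norm hb0
  set t : ℝ := inner ℝ u v with ht
  have htle : t ≤ 1 := by
    calc t ≤ ‖u‖ * ‖v‖ := real_inner_le_norm u v
    _ = 1 := by rw [hnu, hnv]; ring
  have hab : (inner ℝ a b : ℝ) = ‖a‖ * ‖b‖ * t := by
    rw [ht, hu, hv, real_inner_smul_left, real_inner_smul_right]
    field_simp
  have h1 : ‖a - b‖^2 = ‖a‖^2 - 2 * (‖a‖ * ‖b‖ * t) + ‖b‖^2 := by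
    rw [← hab]; exact norm_sub_sq_real a b
  have h2 : ‖u - v‖^2 = 2 - 2*t := by
    rw [norm_sub_sq_real, hnu, hnv, ← ht]; ring
  have hsq : (θmin * ‖u - v‖)^2 ≤ ‖a - b‖^2 := by
    rw [mul_pow, h2, h1]
    nlinarith [sq_nonneg (‖a‖ - ‖b‖), mul_le_mul ha hb (le_of_lt hθmin) (le_of_lt hna)]
  have h3 : 0 ≤ θmin * ‖u - v‖ := mul_nonneg (le_of_lt hθmin) (norm_nonneg _)
  nlinarith [norm_nonneg (a - b)]

/-- Under Assumption 1 (with `m = d`), the gradient of the adversarial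
loss using the `L₂`-optimal attack `x'(θ) = x − ε·θ/‖θ‖` is
`(C_θθ + ε·C_θx/θ_min)`-Lipschitz on `{θ : ‖θ‖ ≥ θ_min}`. -/
theorem l2_adv_loss_gradient_lipschitz (d : ℕ)
    (ℓ : EuclideanSpace ℝ (Fin d) → EuclideanSpace ℝ (Fin d) → ℝ)
    (Cθθ Cθx : ℝ) (hCθθ : 0 ≤ Cθθ) (hCθx : 0 ≤ Cθx)
    (hdiff : ∀ (x : EuclideanSpace ℝ (Fin d)) (θ : EuclideanSpace ℝ (Fin d)),
      DifferentiableAt ℝ (ℓ x) θ)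
    (hθθ : ∀ (x : EuclideanSpace ℝ (Fin d)) (θ₁ θ₂ : EuclideanSpace ℝ (Fin d)),
      ‖gradient (ℓ x) θ₁ - gradient (ℓ x) θ₂‖ ≤ Cθθ * ‖θ₁ - θ₂‖)
    (hθx : ∀ (x₁ x₂ : EuclideanSpace ℝ (Fin d)) (θ : EuclideanSpace ℝ (Fin d)),
      ‖gradient (ℓ x₁) θ - gradient (ℓ x₂) θ‖ ≤ Cθx * ‖x₁ - x₂‖)
    (x : EuclideanSpace ℝ (Fin d)) (ε θmin : ℝ) (hε : 0 < ε) (hθmin : 0 < θmin) :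
    ∀ θ₁ θ₂ : EuclideanSpace ℝ (Fin d), θmin ≤ ‖θ₁‖ → θmin ≤ ‖θ₂‖ →
      ‖gradient (ℓ (x - (ε / ‖θ₁‖) • θ₁)) θ₁ - gradient (ℓ (x - (ε / ‖θ₂‖) • θ₂)) θ₂‖
        ≤ (Cθθ + ε * Cθx / θmin) * ‖θ₁ - θ₂‖ := by
  intro θ₁ θ₂ h1 h2
  set x₁ := x - (ε / ‖θ₁‖) • θ₁ with hx1
  set x₂ := x - (ε / ‖θ₂‖) • θ₂ with hx2
  have tri : ‖gradient (ℓ x₁) θ₁ - gradient (ℓ x₂) θ₂‖ ≤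
      ‖gradient (ℓ x₁) θ₁ - gradient (ℓ x₁) θ₂‖ + ‖gradient (ℓ x₁) θ₂ - gradient (ℓ x₂) θ₂‖ := by
    calc ‖gradient (ℓ x₁) θ₁ - gradient (ℓ x₂) θ₂‖
        = ‖(gradient (ℓ x₁) θ₁ - gradient (ℓ x₁) θ₂) + (gradient (ℓ x₁) θ₂ - gradient (ℓ x₂) θ₂)‖ := by
          congr 1; abel
      _ ≤ _ := norm_add_le _ _
  have hA : ‖gradient (ℓ x₁) θ₁ - gradient (ℓ x₁) θ₂‖ ≤ Cθθ * ‖θ₁ - θ₂‖ := hθθ _ _ _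
  have hxx : ‖x₁ - x₂‖ = ε * ‖‖θ₁‖⁻¹ • θ₁ - ‖θ₂‖⁻¹ • θ₂‖ := by
    have : x₁ - x₂ = ε • (‖θ₂‖⁻¹ • θ₂ - ‖θ₁‖⁻¹ • θ₁) := by
      rw [hx1, hx2]
      simp only [smul_sub, smul_smul, div_eq_mul_inv]
      abel
    rw [this, norm_smul, Real.norm_eq_abs, abs_of_pos hε, norm_sub_rev]
  have hunit : ‖‖θ₁‖⁻¹ • θ₁ - ‖θ₂‖⁻¹ • θ₂‖ ≤ ‖θ₁ - θ₂‖ / θmin := by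
    rw [le_div_iff₀ hθmin]
    have := unit_lipschitz_aux θmin hθmin θ₁ θ₂ h1 h2
    linarith [this]
  have hB : ‖gradient (ℓ x₁) θ₂ - gradient (ℓ x₂) θ₂‖ ≤ (ε * Cθx / θmin) * ‖θ₁ - θ₂‖ := by
    calc ‖gradient (ℓ x₁) θ₂ - gradient (ℓ x₂) θ₂‖ ≤ Cθx * ‖x₁ - x₂‖ := hθx _ _ _
    _ = Cθx * (ε * ‖‖θ₁‖⁻¹ • θ₁ - ‖θ₂‖⁻¹ • θ₂‖) := by rw [hxx]
    _ ≤ Cθx * (ε * (‖θ₁ - θ₂‖ / θmin)) := by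
        apply mul_le_mul_of_nonneg_left _ hCθx
        exact mul_le_mul_of_nonneg_left hunit (le_of_lt hε)
    _ = (ε * Cθx / θmin) * ‖θ₁ - θ₂‖ := by ring
  calc ‖gradient (ℓ x₁) θ₁ - gradient (ℓ x₂) θ₂‖ ≤ _ := tri
  _ ≤ Cθθ * ‖θ₁ - θ₂‖ + (ε * Cθx / θmin) * ‖θ₁ - θ₂‖ := add_le_add hA hB
  _ = (Cθθ + ε * Cθx / θmin) * ‖θ₁ - θ₂‖ := by ring
end

section
/- Let ℓ : ℝ^d × ℝ^m → ℝ be such that the map (x,θ) ↦ ∇_x ℓ(x,θ) is continuously differentiable on an open set V ⊆ ℝ^d × ℝ^m. Let c > 0 and C_θx ≥ 0, and suppose that for all (x,θ) ∈ V every eigenvalue of the Hessian ∇²_x ℓ(x,θ) is at most −c (in particular ∇²_x ℓ ≺ 0), and the operator norm of the mixed derivative ∂_θ ∇_x ℓ(x,θ) is at most C_θx. Let (x₀, θ₀) ∈ V satisfy ∇_x ℓ(x₀, θ₀) = 0. Then there exist an open convex neighborhood U of θ₀ and a continuously differentiable map g : U → ℝ^d such that g(θ₀) = x₀, ∇_x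 ℓ(g(θ), θ) = 0 for every θ ∈ U, and ‖g(θ₁) − g(θ₂)‖ ≤ (C_θx/c)·‖θ₁ − θ₂‖ for all θ₁, θ₂ ∈ U. -/
open RealInnerProductSpace


lemma aux_coercive {d : ℕ} (T : EuclideanSpace ℝ (Fin d) →L[ℝ] EuclideanSpace ℝ (Fin d))
    (c : ℝ) (hc : 0 < c)
    (hs : ∀ v w : EuclideanSpace ℝ (Fin d), ⟪T v, w⟫ = ⟪v, T w⟫)
    (he : ∀ (μ : ℝ) (v : EuclideanSpace ℝ (Fin d)), v ≠ 0 → T v = μ • v → μ ≤ -c) :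
    ∀ v, c * ‖v‖ ≤ ‖T v‖ := by
  have hsym : (T : EuclideanSpace ℝ (Fin d) →ₗ[ℝ] EuclideanSpace ℝ (Fin d)).IsSymmetric :=
    fun v w => hs v w
  have hrank : Module.finrank ℝ (EuclideanSpace ℝ (Fin d)) = d := finrank_euclideanSpace_fin
  set b := hsym.eigenvectorBasis hrank with hb
  have heval : ∀ i, hsym.eigenvalues hrank i ≤ -c := by
    intro i
    refine he _ (b i) ?_ ?_
    · exact (b.toBasis.ne_zero i)
    · exact_mod_cast hsym.apply_eigenvectorBasis hrank i
  have hquad : ∀ v : EuclideanSpace ℝ (Fin d), ⟪T v, v⟫ ≤ -c * ‖v‖ ^ 2 := by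
    intro v
    rw [← b.sum_inner_mul_inner (T v) v]
    have hterm : ∀ i, ⟪T v, b i⟫ * ⟪b i, v⟫ =
        hsym.eigenvalues hrank i * (⟪b i, v⟫ * ⟪b i, v⟫) := by
      intro i
      have h1 : ⟪T v, b i⟫ = hsym.eigenvalues hrank i * ⟪b i, v⟫ := by
        rw [hs v (b i)]
        have hTb : T (b i) = (hsym.eigenvalues hrank i : ℝ) • b i :=
          hsym.apply_eigenvectorBasis hrank i
        rw [hTb, real_inner_smul_right, real_inner_comm]
      rw [h1]; ring
    calc ∑ i, ⟪T v, b i⟫ * ⟪b i, v⟫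
        = ∑ i, hsym.eigenvalues hrank i * (⟪b i, v⟫ * ⟪b i, v⟫) := by
          exact Finset.sum_congr rfl fun i _ => hterm i
      _ ≤ ∑ i, (-c) * (⟪b i, v⟫ * ⟪b i, v⟫) := by
          refine Finset.sum_le_sum fun i _ => ?_
          exact mul_le_mul_of_nonneg_right (heval i) (mul_self_nonneg _)
      _ = -c * ∑ i, ⟪v, b i⟫ * ⟪b i, v⟫ := by
          rw [← Finset.mul_sum]
          congr 1
          exact Finset.sum_congr rfl fun i _ => by rw [real_inner_comm v (b i)]
      _ = -c * ‖v‖ ^ 2 := by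
          rw [b.sum_inner_mul_inner v v, real_inner_self_eq_norm_sq]
  intro v
  rcases eq_or_ne v 0 with rfl | hv
  · simp
  have h1 : c * ‖v‖ ^ 2 ≤ -⟪T v, v⟫ := by linarith [hquad v]
  have h2 : -⟪T v, v⟫ ≤ ‖T v‖ * ‖v‖ := by
    have := abs_real_inner_le_norm (T v) v
    have := neg_abs_le (⟪T v, v⟫ : ℝ)
    linarith
  have hvpos : 0 < ‖v‖ := norm_pos_iff.mpr hv
  have : c * ‖v‖ * ‖v‖ ≤ ‖T v‖ * ‖v‖ := by nlinarith
  exact le_of_mul_le_mul_right this hvpos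

lemma aux_ift {d m : ℕ}
    (f : EuclideanSpace ℝ (Fin d) × EuclideanSpace ℝ (Fin m) → EuclideanSpace ℝ (Fin d))
    (V : Set (EuclideanSpace ℝ (Fin d) × EuclideanSpace ℝ (Fin m))) (hV : IsOpen V)
    (hsmooth : ContDiffOn ℝ 1 f V)
    (c Cθx : ℝ) (hc : 0 < c) (hCθx : 0 ≤ Cθx)
    (hcoer : ∀ p ∈ V, ∀ v : EuclideanSpace ℝ (Fin d), c * ‖v‖ ≤ ‖fderiv ℝ f p (v, 0)‖)
    (hmixed : ∀ p ∈ V, ∀ w : EuclideanSpace ℝ (Fin m), ‖fderiv ℝ f p (0, w)‖ ≤ Cθx * ‖w‖)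
    (x₀ : EuclideanSpace ℝ (Fin d)) (θ₀ : EuclideanSpace ℝ (Fin m))
    (hmem : (x₀, θ₀) ∈ V) (hcrit : f (x₀, θ₀) = 0) :
    ∃ U : Set (EuclideanSpace ℝ (Fin m)), IsOpen U ∧ Convex ℝ U ∧ θ₀ ∈ U ∧
      ∃ g : EuclideanSpace ℝ (Fin m) → EuclideanSpace ℝ (Fin d),
        ContDiffOn ℝ 1 g U ∧ g θ₀ = x₀ ∧
        (∀ θ ∈ U, f (g θ, θ) = 0) ∧
        ∀ θ₁ ∈ U, ∀ θ₂ ∈ U, ‖g θ₁ - g θ₂‖ ≤ (Cθx / c) * ‖θ₁ - θ₂‖ := by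
  let E := EuclideanSpace ℝ (Fin d)
  let F := EuclideanSpace ℝ (Fin m)
  set p₀ : E × F := (x₀, θ₀) with hp₀
  have hfat : ContDiffAt ℝ 1 f p₀ := hsmooth.contDiffAt (hV.mem_nhds hmem)
  have hdf : DifferentiableAt ℝ f p₀ := hfat.differentiableAt one_ne_zero
  set Df := fderiv ℝ f p₀ with hDf
  set H : E →L[ℝ] E := Df.comp (ContinuousLinearMap.inl ℝ E F) with hH
  have hHcoer : ∀ v : E, c * ‖v‖ ≤ ‖H v‖ := fun v => hcoer p₀ hmem v
  have hker : ∀ v : E, H v = 0 → v = 0 := by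
    intro v hv
    have := hHcoer v
    rw [hv, norm_zero] at this
    have : ‖v‖ ≤ 0 := by nlinarith [norm_nonneg v]
    exact norm_le_zero_iff.mp this
  have hinj : Function.Injective (H : E →ₗ[ℝ] E) := by
    rw [injective_iff_map_eq_zero]
    exact fun v hv => hker v hv
  have hsurj : Function.Surjective (H : E →ₗ[ℝ] E) :=
    LinearMap.injective_iff_surjective.mp hinj
  set Heq : E ≃L[ℝ] E :=
    (LinearEquiv.ofBijective (H : E →ₗ[ℝ] E) ⟨hinj, hsurj⟩).toContinuousLinearEquiv with hHeq
  have hHeq_apply : ∀ v, Heq v = H v := fun v => rfl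
  set M : F →L[ℝ] E := Df.comp (ContinuousLinearMap.inr ℝ E F) with hM
  have hDadd : ∀ (v : E) (w : F), Df (v, w) = H v + M w := by
    intro v w
    have h1 : ((v, w) : E × F) = (v, 0) + (0, w) := by simp
    rw [h1, map_add]
    rfl
  set Φ : E × F → E × F := fun p => (f p, p.2) with hΦ
  set A : (E × F) →L[ℝ] (E × F) := Df.prod (ContinuousLinearMap.snd ℝ E F) with hA
  set B : (E × F) →L[ℝ] (E × F) :=
    ((Heq.symm : E →L[ℝ] E).comp
      ((ContinuousLinearMap.fst ℝ E F) - M.comp (ContinuousLinearMap.snd ℝ E F))).prod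
      (ContinuousLinearMap.snd ℝ E F) with hB
  have hleft : Function.LeftInverse B A := by
    rintro ⟨v, w⟩
    have h1 : A (v, w) = (Df (v, w), w) := rfl
    have h2 : B (Df (v, w), w) = (Heq.symm (Df (v, w) - M w), w) := rfl
    rw [h1, h2, hDadd, add_sub_cancel_right, ← hHeq_apply, Heq.symm_apply_apply]
  have hright : Function.RightInverse B A := by
    rintro ⟨a, b⟩
    have h1 : B (a, b) = (Heq.symm (a - M b), b) := rfl
    have h2 : A (Heq.symm (a - M b), b) = (Df (Heq.symm (a - M b), b), b) := rfl
    rw [h1, h2, hDadd]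
    have h3 : H (Heq.symm (a - M b)) = a - M b := by
      rw [← hHeq_apply, Heq.apply_symm_apply]
    rw [h3, sub_add_cancel]
  set Aeq : (E × F) ≃L[ℝ] (E × F) := ContinuousLinearEquiv.equivOfInverse A B hleft hright
  have hΦcd : ContDiffAt ℝ 1 Φ p₀ := hfat.prodMk contDiff_snd.contDiffAt
  have hAΦ : HasFDerivAt Φ (Aeq : (E × F) →L[ℝ] (E × F)) p₀ := by
    have h1 : HasFDerivAt Φ A p₀ := hdf.hasFDerivAt.prodMk hasFDerivAt_snd
    exact h1
  have hstrict : HasStrictFDerivAt Φ (Aeq : (E × F) →L[ℝ] (E × F)) p₀ :=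
    hΦcd.hasStrictFDerivAt' hAΦ one_ne_zero
  set linv : E × F → E × F := hstrict.localInverse Φ Aeq p₀ with hlinv
  have hΦp₀ : Φ p₀ = ((0 : E), θ₀) := by
    rw [hΦ]
    simp only [hp₀]
    rw [hcrit]
  have hlinvp : linv ((0 : E), θ₀) = p₀ := by
    rw [← hΦp₀]
    exact hstrict.localInverse_apply_image
  have hcd : ContDiffAt ℝ 1 linv ((0 : E), θ₀) := by
    rw [← hΦp₀]
    exact hΦcd.to_localInverse hAΦ one_ne_zero
  have hrinv : ∀ᶠ y in nhds ((0 : E), θ₀), Φ (linv y) = y := by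
    rw [← hΦp₀]
    exact hstrict.eventually_right_inverse
  have hVev : ∀ᶠ y in nhds ((0 : E), θ₀), linv y ∈ V := by
    have hca : ContinuousAt linv ((0 : E), θ₀) := by
      rw [← hΦp₀]
      exact hstrict.localInverse_continuousAt
    exact hca.eventually_mem (hV.mem_nhds (by rw [hlinvp]; exact hmem))
  obtain ⟨s, hsmem, hscd⟩ := hcd.contDiffOn le_rfl (by norm_num)
  have hWmem : s ∩ {y | Φ (linv y) = y ∧ linv y ∈ V} ∈ nhds ((0 : E), θ₀) :=
    Filter.inter_mem hsmem (hrinv.and hVev)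
  obtain ⟨O, hOsub, hOopen, hOmem⟩ := mem_nhds_iff.mp hWmem
  set j : F → E × F := fun θ => ((0 : E), θ) with hj
  have hjc : Continuous j := continuous_const.prodMk continuous_id
  obtain ⟨r, hr, hball⟩ := Metric.isOpen_iff.mp (hOopen.preimage hjc) θ₀ hOmem
  set U : Set F := Metric.ball θ₀ r with hU
  set g : F → E := fun θ => (linv ((0 : E), θ)).1 with hg
  have hUO : ∀ θ ∈ U, ((0 : E), θ) ∈ O := fun θ hθ => hball hθ
  have hlinv_eq : ∀ θ ∈ U, linv ((0 : E), θ) = (g θ, θ) := by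
    intro θ hθ
    have h1 := (hOsub (hUO θ hθ)).2.1
    have h2 : (linv ((0 : E), θ)).2 = θ := congrArg Prod.snd h1
    exact Prod.ext_iff.mpr ⟨rfl, h2⟩
  have hfeq : ∀ θ ∈ U, f (g θ, θ) = 0 := by
    intro θ hθ
    have h1 := (hOsub (hUO θ hθ)).2.1
    have h2 : f (linv ((0 : E), θ)) = 0 := congrArg Prod.fst h1
    rwa [hlinv_eq θ hθ] at h2
  have hVU : ∀ θ ∈ U, ((g θ, θ) : E × F) ∈ V := by
    intro θ hθ
    have := (hOsub (hUO θ hθ)).2.2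
    rwa [hlinv_eq θ hθ] at this
  have hgcd : ContDiffOn ℝ 1 g U := by
    have hjcd : ContDiff ℝ 1 j := contDiff_const.prodMk contDiff_id
    have hcomp : ContDiffOn ℝ 1 (linv ∘ j) U :=
      hscd.comp hjcd.contDiffOn (fun θ hθ => (hOsub (hUO θ hθ)).1)
    exact contDiff_fst.comp_contDiffOn hcomp
  have hgθ₀ : g θ₀ = x₀ := by
    rw [hg]
    simp only
    rw [hlinvp]
  have hbound : ∀ θ ∈ U, ‖fderiv ℝ g θ‖ ≤ Cθx / c := by
    intro θ hθ
    have hpV : ((g θ, θ) : E × F) ∈ V := hVU θ hθ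
    have hgd : DifferentiableAt ℝ g θ :=
      ((hgcd.contDiffAt (Metric.isOpen_ball.mem_nhds hθ)).differentiableAt one_ne_zero)
    have hfd : DifferentiableAt ℝ f (g θ, θ) :=
      (hsmooth.contDiffAt (hV.mem_nhds hpV)).differentiableAt one_ne_zero
    set Dq := fderiv ℝ f (g θ, θ) with hDq
    set g' := fderiv ℝ g θ with hg'
    have hinner : HasFDerivAt (fun θ' : F => ((g θ', θ') : E × F))
        (g'.prod (ContinuousLinearMap.id ℝ F)) θ :=
      hgd.hasFDerivAt.prodMk (hasFDerivAt_id θ)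
    have hcomp : HasFDerivAt (fun θ' : F => f (g θ', θ'))
        (Dq.comp (g'.prod (ContinuousLinearMap.id ℝ F))) θ := by
      have := HasFDerivAt.comp (𝕜 := ℝ) (g := f)
        (f := fun θ' : F => ((g θ', θ') : EuclideanSpace ℝ (Fin d) × EuclideanSpace ℝ (Fin m)))
        θ hfd.hasFDerivAt hinner
      exact this
    have hev : (fun θ' : F => f (g θ', θ')) =ᶠ[nhds θ] (fun _ => (0 : E)) := by
      filter_upwards [Metric.isOpen_ball.mem_nhds hθ] with θ' hθ' using hfeq θ' hθ'
    have hzero : HasFDerivAt (fun _ : F => (0 : E))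
        (Dq.comp (g'.prod (ContinuousLinearMap.id ℝ F))) θ :=
      hcomp.congr_of_eventuallyEq hev.symm
    have hD0 : Dq.comp (g'.prod (ContinuousLinearMap.id ℝ F)) = 0 :=
      hzero.unique (hasFDerivAt_const 0 θ)
    have key : ∀ w : F, Dq (g' w, w) = 0 := by
      intro w
      have := ContinuousLinearMap.ext_iff.mp hD0 w
      simpa using this
    refine ContinuousLinearMap.opNorm_le_bound _ (div_nonneg hCθx hc.le) ?_
    intro w
    have h1 : ((g' w, w) : E × F) = (g' w, 0) + (0, w) := by simp
    have h2 : Dq (g' w, 0) = - Dq (0, w) := by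
      have hk := key w
      rw [h1, map_add] at hk
      exact eq_neg_of_add_eq_zero_left hk
    have h3 : c * ‖g' w‖ ≤ Cθx * ‖w‖ := by
      calc c * ‖g' w‖ ≤ ‖Dq (g' w, 0)‖ := hcoer _ hpV _
        _ = ‖Dq (0, w)‖ := by rw [h2, norm_neg]
        _ ≤ Cθx * ‖w‖ := hmixed _ hpV _
    rw [div_mul_eq_mul_div, le_div_iff₀ hc, mul_comm]
    exact h3
  refine ⟨U, Metric.isOpen_ball, convex_ball θ₀ r, Metric.mem_ball_self hr, g, hgcd, hgθ₀,
    hfeq, ?_⟩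
  intro θ₁ h₁ θ₂ h₂
  have := (convex_ball θ₀ r).norm_image_sub_le_of_norm_fderivWithin_le
    (hgcd.differentiableOn one_ne_zero)
    (fun x hx => by
      rw [fderivWithin_of_isOpen Metric.isOpen_ball hx]
      exact hbound x hx) h₂ h₁
  exact this

/-- Implicit-function-theorem smoothness of the (interior) optimal
adversarial example. If `(x,θ) ↦ ∇_x ℓ(x,θ)` is `C¹` on an open set `V`, the
Hessian `∇²_x ℓ` is symmetric with every eigenvalue at most `−c < 0` on `V`, and the
mixed derivative `∂_θ ∇_x ℓ` has operator norm at most `C_θx` on `V`, then around any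
critical point `∇_x ℓ(x₀,θ₀) = 0` with `(x₀,θ₀) ∈ V` there is an open convex
neighborhood `U` of `θ₀` and a `C¹` map `g` with `g(θ₀) = x₀`,
`∇_x ℓ(g(θ),θ) = 0` on `U`, and `g` is `(C_θx/c)`-Lipschitz on `U`. -/
theorem interior_adv_example_implicit_lipschitz (d m : ℕ)
    (ℓ : EuclideanSpace ℝ (Fin d) → EuclideanSpace ℝ (Fin m) → ℝ)
    (V : Set (EuclideanSpace ℝ (Fin d) × EuclideanSpace ℝ (Fin m))) (hV : IsOpen V)
    (hsmooth : ContDiffOn ℝ 1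
      (fun p : EuclideanSpace ℝ (Fin d) × EuclideanSpace ℝ (Fin m) =>
        gradient (fun x => ℓ x p.2) p.1) V)
    (c Cθx : ℝ) (hc : 0 < c) (hCθx : 0 ≤ Cθx)
    (hsymm : ∀ p ∈ V, ∀ v w : EuclideanSpace ℝ (Fin d),
      ⟪(fderiv ℝ (fun x => gradient (fun x' => ℓ x' p.2) x) p.1) v, w⟫ =
        ⟪v, (fderiv ℝ (fun x => gradient (fun x' => ℓ x' p.2) x) p.1) w⟫)
    (heig : ∀ p ∈ V, ∀ (μ : ℝ) (v : EuclideanSpace ℝ (Fin d)), v ≠ 0 →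
      (fderiv ℝ (fun x => gradient (fun x' => ℓ x' p.2) x) p.1) v = μ • v → μ ≤ -c)
    (hmix : ∀ p ∈ V,
      ‖fderiv ℝ (fun θ => gradient (fun x' => ℓ x' θ) p.1) p.2‖ ≤ Cθx)
    (x₀ : EuclideanSpace ℝ (Fin d)) (θ₀ : EuclideanSpace ℝ (Fin m))
    (hmem : (x₀, θ₀) ∈ V)
    (hcrit : gradient (fun x => ℓ x θ₀) x₀ = 0) :
    ∃ U : Set (EuclideanSpace ℝ (Fin m)), IsOpen U ∧ Convex ℝ U ∧ θ₀ ∈ U ∧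
      ∃ g : EuclideanSpace ℝ (Fin m) → EuclideanSpace ℝ (Fin d),
        ContDiffOn ℝ 1 g U ∧ g θ₀ = x₀ ∧
        (∀ θ ∈ U, gradient (fun x => ℓ x θ) (g θ) = 0) ∧
        ∀ θ₁ ∈ U, ∀ θ₂ ∈ U, ‖g θ₁ - g θ₂‖ ≤ (Cθx / c) * ‖θ₁ - θ₂‖ := by
  
  have hdiffat : ∀ p ∈ V, DifferentiableAt ℝ
      (fun p : EuclideanSpace ℝ (Fin d) × EuclideanSpace ℝ (Fin m) =>
        gradient (fun x => ℓ x p.2) p.1) p := fun p hp =>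
    (hsmooth.contDiffAt (hV.mem_nhds hp)).differentiableAt one_ne_zero
  set f : EuclideanSpace ℝ (Fin d) × EuclideanSpace ℝ (Fin m) → EuclideanSpace ℝ (Fin d) :=
    fun p => gradient (fun x => ℓ x p.2) p.1 with hf_def
  have hpartx : ∀ p ∈ V, fderiv ℝ (fun x => gradient (fun x' => ℓ x' p.2) x) p.1
      = (fderiv ℝ f p).comp (ContinuousLinearMap.inl ℝ
          (EuclideanSpace ℝ (Fin d)) (EuclideanSpace ℝ (Fin m))) := by
    intro p hp
    have h1 : HasFDerivAt (fun x : EuclideanSpace ℝ (Fin d) => (x, p.2))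
        (ContinuousLinearMap.inl ℝ (EuclideanSpace ℝ (Fin d)) (EuclideanSpace ℝ (Fin m))) p.1 :=
      hasFDerivAt_prodMk_left _ _
    have h2 : HasFDerivAt f (fderiv ℝ f p) (p.1, p.2) := by
      rw [Prod.mk.eta]; exact (hdiffat p hp).hasFDerivAt
    have h3 := HasFDerivAt.comp (𝕜 := ℝ) (g := f)
      (f := fun x : EuclideanSpace ℝ (Fin d) => (x, p.2)) p.1 h2 h1
    exact h3.fderiv
  have hpartθ : ∀ p ∈ V, fderiv ℝ (fun θ => gradient (fun x' => ℓ x' θ) p.1) p.2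
      = (fderiv ℝ f p).comp (ContinuousLinearMap.inr ℝ
          (EuclideanSpace ℝ (Fin d)) (EuclideanSpace ℝ (Fin m))) := by
    intro p hp
    have h1 : HasFDerivAt (fun θ : EuclideanSpace ℝ (Fin m) => (p.1, θ))
        (ContinuousLinearMap.inr ℝ (EuclideanSpace ℝ (Fin d)) (EuclideanSpace ℝ (Fin m))) p.2 :=
      hasFDerivAt_prodMk_right _ _
    have h2 : HasFDerivAt f (fderiv ℝ f p) (p.1, p.2) := by
      rw [Prod.mk.eta]; exact (hdiffat p hp).hasFDerivAt
    have h3 := HasFDerivAt.comp (𝕜 := ℝ) (g := f)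
      (f := fun θ : EuclideanSpace ℝ (Fin m) => (p.1, θ)) p.2 h2 h1
    exact h3.fderiv
  have hcoer : ∀ p ∈ V, ∀ v : EuclideanSpace ℝ (Fin d), c * ‖v‖ ≤ ‖fderiv ℝ f p (v, 0)‖ := by
    intro p hp v
    have := aux_coercive (fderiv ℝ (fun x => gradient (fun x' => ℓ x' p.2) x) p.1) c hc
      (hsymm p hp) (heig p hp) v
    rwa [hpartx p hp] at this
  have hmixed : ∀ p ∈ V, ∀ w : EuclideanSpace ℝ (Fin m),
      ‖fderiv ℝ f p (0, w)‖ ≤ Cθx * ‖w‖ := by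
    intro p hp w
    calc ‖(fderiv ℝ f p).comp (ContinuousLinearMap.inr ℝ
            (EuclideanSpace ℝ (Fin d)) (EuclideanSpace ℝ (Fin m))) w‖
        ≤ ‖(fderiv ℝ f p).comp (ContinuousLinearMap.inr ℝ
            (EuclideanSpace ℝ (Fin d)) (EuclideanSpace ℝ (Fin m)))‖ * ‖w‖ :=
          ContinuousLinearMap.le_opNorm _ _
      _ ≤ Cθx * ‖w‖ := by
          apply mul_le_mul_of_nonneg_right _ (norm_nonneg _)
          rw [← hpartθ p hp]; exact hmix p hp
  obtain ⟨U, hUopen, hUconv, hUmem, g, hgcd, hgθ₀, hgeq, hglip⟩ :=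
    aux_ift f V hV hsmooth c Cθx hc hCθx hcoer hmixed x₀ θ₀ hmem hcrit
  exact ⟨U, hUopen, hUconv, hUmem, g, hgcd, hgθ₀, hgeq, hglip⟩
end

section
/- Fix x ∈ ℝ^d and ε > 0, and let ℓ : ℝ^d × ℝ^m → ℝ be such that (x',θ) ↦ ∇_{x'} ℓ(x',θ) is continuously differentiable. Define the Lagrangian J(μ, x', θ) = ℓ(x', θ) − μ(‖x' − x‖₂ − ε) for x' ≠ x, μ ∈ ℝ, and write x̃ = (μ, x') ∈ ℝ^{1+d}, with ∇_x̃ J its gradient in (μ, x') and ∇²_x̃ J the corresponding (1+d)×(1+d) bordered Hessian. Let c > 0 and C_θx ≥ 0, and suppose on an open set V containing (μ*, x'*, θ₀): every singular value of ∇²_x̃ J is at least c, and the operator norm of the mixed derivative ∂_θ ∇_x̃ J is at most C_θx. Suppose ∇_x̃ J(μ*, x'*, θ₀) = 0 with ‖x'* − x‖₂ = ε. Then there exist an open convex neighborhood U of θ₀ and continuously differentiable maps μ : U → ℝ and x' : U → ℝ^d with μ(θ₀) = μ*, x'(θ₀) = x'*, ∇_x̃ J(μ(θ), x'(θ), θ)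 = 0 for all θ ∈ U, and ‖x'(θ₁) − x'(θ₂)‖₂ ≤ (C_θx/c)·‖θ₁ − θ₂‖ for all θ₁, θ₂ ∈ U. -/
open Topology Filter


open RealInnerProductSpace

/-- The Lagrangian `J(μ, x', θ) = ℓ(x', θ) − μ(‖x' − x‖₂ − ε)` of the `L₂`-constrained
adversarial attack problem, viewed as a function of `x̃ = (μ, x')` in the Euclidean
(`L²`) product space `WithLp 2 (ℝ × ℝ^d)` and of the parameter `θ`. -/
noncomputable def advLagrangian (d m : ℕ)
    (ℓ : EuclideanSpace ℝ (Fin d) → EuclideanSpace ℝ (Fin m) → ℝ)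
    (x : EuclideanSpace ℝ (Fin d)) (ε : ℝ)
    (xt : WithLp 2 (ℝ × EuclideanSpace ℝ (Fin d)))
    (θ : EuclideanSpace ℝ (Fin m)) : ℝ :=
  ℓ (WithLp.equiv 2 (ℝ × EuclideanSpace ℝ (Fin d)) xt).2 θ -
    (WithLp.equiv 2 (ℝ × EuclideanSpace ℝ (Fin d)) xt).1 *
      (‖(WithLp.equiv 2 (ℝ × EuclideanSpace ℝ (Fin d)) xt).2 - x‖ - ε)

/-- The gradient `∇_x̃ J` of the Lagrangian in `x̃ = (μ, x')`. -/
noncomputable def advLagrangianGrad (d m : ℕ)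
    (ℓ : EuclideanSpace ℝ (Fin d) → EuclideanSpace ℝ (Fin m) → ℝ)
    (x : EuclideanSpace ℝ (Fin d)) (ε : ℝ)
    (xt : WithLp 2 (ℝ × EuclideanSpace ℝ (Fin d)))
    (θ : EuclideanSpace ℝ (Fin m)) : WithLp 2 (ℝ × EuclideanSpace ℝ (Fin d)) :=
  gradient (fun xt' => advLagrangian d m ℓ x ε xt' θ) xt


open ContinuousLinearMap in
lemma fderiv_prod_decomp {E F G : Type*} [NormedAddCommGroup E] [NormedSpace ℝ E]
    [NormedAddCommGroup F] [NormedSpace ℝ F] [NormedAddCommGroup G] [NormedSpace ℝ G]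
    {f : E × F → G} {q : E × F} (hd : DifferentiableAt ℝ f q) (u : E) (v : F) :
    fderiv ℝ f q (u, v) = fderiv ℝ (fun a => f (a, q.2)) q.1 u
      + fderiv ℝ (fun b => f (q.1, b)) q.2 v := by
  have h1 : HasFDerivAt (fun a => f (a, q.2)) ((fderiv ℝ f q).comp (inl ℝ E F)) q.1 :=
    hd.hasFDerivAt.comp q.1 (hasFDerivAt_prodMk_left q.1 q.2)
  have h2 : HasFDerivAt (fun b => f (q.1, b)) ((fderiv ℝ f q).comp (inr ℝ E F)) q.2 :=
    hd.hasFDerivAt.comp q.2 (hasFDerivAt_prodMk_right q.1 q.2)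
  rw [h1.fderiv, h2.fderiv]
  have : (u, v) = ((u, 0) : E × F) + (0, v) := by simp
  rw [this, map_add]
  simp

lemma implicit_lipschitz_aux {E F : Type*} [NormedAddCommGroup E] [NormedSpace ℝ E]
    [FiniteDimensional ℝ E] [NormedAddCommGroup F] [NormedSpace ℝ F]
    [FiniteDimensional ℝ F]
    (f : E × F → E) (V : Set (E × F)) (hV : IsOpen V)
    (hf : ContDiffOn ℝ 1 f V)
    (c C : ℝ) (hc : 0 < c) (hC : 0 ≤ C)
    (hsing : ∀ p ∈ V, ∀ v : E, c * ‖v‖ ≤ ‖fderiv ℝ (fun a => f (a, p.2)) p.1 v‖)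
    (hmix : ∀ p ∈ V, ‖fderiv ℝ (fun b => f (p.1, b)) p.2‖ ≤ C)
    (p₀ : E × F) (hp₀ : p₀ ∈ V) (hf0 : f p₀ = 0) :
    ∃ U : Set F, IsOpen U ∧ Convex ℝ U ∧ p₀.2 ∈ U ∧
      ∃ g : F → E, ContDiffOn ℝ 1 g U ∧ g p₀.2 = p₀.1 ∧
        (∀ θ ∈ U, (g θ, θ) ∈ V ∧ f (g θ, θ) = 0) ∧
        ∀ θ₁ ∈ U, ∀ θ₂ ∈ U, ‖g θ₁ - g θ₂‖ ≤ (C / c) * ‖θ₁ - θ₂‖ := by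
  classical
  have hfat : ContDiffAt ℝ 1 f p₀ := hf.contDiffAt (hV.mem_nhds hp₀)
  set Φ : E × F → E × F := fun p => (f p, p.2) with hΦdef
  have hΦ : ContDiffAt ℝ 1 Φ p₀ := hfat.prodMk contDiffAt_snd
  have hdf : DifferentiableAt ℝ f p₀ := hfat.differentiableAt one_ne_zero
  set D : (E × F) →L[ℝ] (E × F) :=
    (fderiv ℝ f p₀).prod (ContinuousLinearMap.snd ℝ E F) with hDdef
  have hΦD : HasFDerivAt Φ D p₀ := hdf.hasFDerivAt.prodMk hasFDerivAt_snd
  -- D is bijective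
  have hinj : Function.Injective D := by
    rw [injective_iff_map_eq_zero]
    intro w hw
    have h1 : fderiv ℝ f p₀ w = 0 := congrArg Prod.fst hw
    have h2 : w.2 = 0 := congrArg Prod.snd hw
    have hw1 : w = (w.1, (0 : F)) := by rw [← h2]
    have hA : fderiv ℝ (fun a => f (a, p₀.2)) p₀.1 w.1 = 0 := by
      have := fderiv_prod_decomp hdf w.1 (0 : F)
      simp only [map_zero, add_zero] at this
      rw [← this, ← hw1, h1]
    have hle := hsing p₀ hp₀ w.1
    rw [hA, norm_zero] at hle
    have hn : ‖w.1‖ ≤ 0 := by nlinarith [norm_nonneg w.1]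
    have hw10 : w.1 = 0 := norm_le_zero_iff.mp hn
    rw [hw1, hw10]; rfl
  have hsurj : Function.Surjective (D : (E × F) →ₗ[ℝ] (E × F)) :=
    LinearMap.injective_iff_surjective.mp hinj
  set eL : (E × F) ≃L[ℝ] (E × F) :=
    (LinearEquiv.ofBijective (D : (E × F) →ₗ[ℝ] (E × F))
      ⟨hinj, hsurj⟩).toContinuousLinearEquiv with heLdef
  have heL : (eL : (E × F) →L[ℝ] (E × F)) = D := by ext w <;> rfl
  have hΦ' : HasFDerivAt Φ (eL : (E × F) →L[ℝ] (E × F)) p₀ := heL ▸ hΦD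
  -- local inverse
  set ginv := hΦ.localInverse hΦ' one_ne_zero with hginv
  have hinvc : ContDiffAt ℝ 1 ginv (Φ p₀) := hΦ.to_localInverse hΦ' one_ne_zero
  have hΦp₀ : Φ p₀ = ((0 : E), p₀.2) := by simp [hΦdef, hf0]
  have hri : ∀ᶠ y in 𝓝 (Φ p₀), Φ (ginv y) = y :=
    (hΦ.hasStrictFDerivAt' hΦ' one_ne_zero).eventually_right_inverse
  have hgp : ginv (Φ p₀) = p₀ := hΦ.localInverse_apply_image hΦ' one_ne_zero
  -- the implicit function candidate
  set G : F → E × F := fun θ => ginv ((0 : E), θ) with hGdef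
  have hGat : ContDiffAt ℝ 1 G p₀.2 := by
    have h0 : ContDiffAt ℝ 1 (fun θ : F => (((0 : E), θ) : E × F)) p₀.2 :=
      contDiffAt_const.prodMk contDiffAt_id
    have := (hΦp₀ ▸ hinvc).comp p₀.2 h0
    exact this
  have hG0 : G p₀.2 = p₀ := by rw [hGdef]; simp only; rw [← hΦp₀, hgp]
  have htend : Filter.Tendsto (fun θ : F => (((0 : E), θ) : E × F)) (𝓝 p₀.2)
      (𝓝 (Φ p₀)) := by
    rw [hΦp₀]; exact (continuous_const.prodMk continuous_id).continuousAt
  have e1 : ∀ᶠ θ in 𝓝 p₀.2, Φ (G θ) = ((0 : E), θ) := htend.eventually hri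
  have e2 : ∀ᶠ θ in 𝓝 p₀.2, G θ ∈ V := by
    refine hGat.continuousAt.eventually_mem ?_
    rw [hG0]; exact hV.mem_nhds hp₀
  obtain ⟨t, ht, hGt⟩ : ∃ t ∈ 𝓝 p₀.2, ContDiffOn ℝ 1 G t :=
    hGat.contDiffOn le_rfl (by simp)
  have hmem2 : {θ | Φ (G θ) = ((0 : E), θ) ∧ G θ ∈ V} ∩ t ∈ 𝓝 p₀.2 :=
    Filter.inter_mem (e1.and e2) ht
  obtain ⟨r, hr, hball⟩ := Metric.mem_nhds_iff.mp hmem2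
  set U := Metric.ball p₀.2 r with hUdef
  have hUopen : IsOpen U := Metric.isOpen_ball
  have hθ₀U : p₀.2 ∈ U := Metric.mem_ball_self hr
  have hUsub : ∀ θ ∈ U, (Φ (G θ) = ((0 : E), θ) ∧ G θ ∈ V) ∧ θ ∈ t :=
    fun θ hθ => ⟨(hball hθ).1, (hball hθ).2⟩
  set g : F → E := fun θ => (G θ).1 with hgdef
  have hGeq : ∀ θ ∈ U, G θ = (g θ, θ) := by
    intro θ hθ
    have h := (hUsub θ hθ).1.1
    have : (G θ).2 = θ := congrArg Prod.snd h
    rw [hgdef]; exact Prod.ext rfl this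
  have hfzero : ∀ θ ∈ U, f (g θ, θ) = 0 := by
    intro θ hθ
    have h := (hUsub θ hθ).1.1
    have : f (G θ) = 0 := congrArg Prod.fst h
    rwa [hGeq θ hθ] at this
  have hmemV : ∀ θ ∈ U, (g θ, θ) ∈ V := by
    intro θ hθ
    have := (hUsub θ hθ).1.2
    rwa [hGeq θ hθ] at this
  have hGU : ContDiffOn ℝ 1 G U := hGt.mono fun θ hθ => (hUsub θ hθ).2
  have hgU : ContDiffOn ℝ 1 g U := hGU.fst
  have hgdiff : ∀ θ ∈ U, DifferentiableAt ℝ g θ := fun θ hθ =>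
    ((hgU.contDiffAt (hUopen.mem_nhds hθ)).differentiableAt one_ne_zero)
  -- derivative bound
  have hbound : ∀ θ ∈ U, ‖fderiv ℝ g θ‖ ≤ C / c := by
    intro θ hθ
    set q : E × F := (g θ, θ) with hqdef
    have hqV : q ∈ V := hmemV θ hθ
    have hfq : DifferentiableAt ℝ f q :=
      (hf.contDiffAt (hV.mem_nhds hqV)).differentiableAt one_ne_zero
    have hgd := hgdiff θ hθ
    have hpair : HasFDerivAt (fun θ' : F => ((g θ', θ') : E × F))
        ((fderiv ℝ g θ).prod (ContinuousLinearMap.id ℝ F)) θ :=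
      hgd.hasFDerivAt.prodMk (hasFDerivAt_id θ)
    have hcomp : HasFDerivAt (f ∘ fun θ' : F => ((g θ', θ') : E × F))
        ((fderiv ℝ f q).comp ((fderiv ℝ g θ).prod (ContinuousLinearMap.id ℝ F))) θ :=
      HasFDerivAt.comp (f := fun θ' : F => ((g θ', θ') : E × F)) (g := f) θ
        hfq.hasFDerivAt hpair
    have hzero : fderiv ℝ (fun θ' => f (g θ', θ')) θ = 0 := by
      have hev : (fun θ' => f (g θ', θ')) =ᶠ[𝓝 θ] fun _ => (0 : E) :=
        Filter.eventuallyEq_of_mem (hUopen.mem_nhds hθ) fun θ' hθ' => hfzero θ' hθ'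
      rw [hev.fderiv_eq, fderiv_fun_const]; rfl
    have hkey : ∀ w : F, fderiv ℝ f q (fderiv ℝ g θ w, w) = 0 := by
      intro w
      have hzero' : fderiv ℝ (f ∘ fun θ' : F => ((g θ', θ') : E × F)) θ = 0 := hzero
      have := hcomp.fderiv
      rw [hzero'] at this
      have := congrFun (congrArg (fun (L : F →L[ℝ] E) => (L : F → E)) this.symm) w
      simpa using this
    refine ContinuousLinearMap.opNorm_le_bound _ (div_nonneg hC hc.le) fun w => ?_
    have hdec := fderiv_prod_decomp hfq (fderiv ℝ g θ w) w
    rw [hkey w] at hdec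
    have hAB : fderiv ℝ (fun a => f (a, q.2)) q.1 (fderiv ℝ g θ w)
        = - fderiv ℝ (fun b => f (q.1, b)) q.2 w :=
      eq_neg_of_add_eq_zero_left hdec.symm
    have h1 := hsing q hqV (fderiv ℝ g θ w)
    rw [hAB, norm_neg] at h1
    have h2 : ‖fderiv ℝ (fun b => f (q.1, b)) q.2 w‖ ≤ C * ‖w‖ :=
      le_trans (ContinuousLinearMap.le_opNorm _ w)
        (mul_le_mul_of_nonneg_right (hmix q hqV) (norm_nonneg w))
    rw [div_mul_eq_mul_div, le_div_iff₀ hc, mul_comm _ c]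
    exact le_trans h1 h2
  refine ⟨U, hUopen, convex_ball _ _, hθ₀U, g, hgU, ?_, fun θ hθ => ⟨hmemV θ hθ, hfzero θ hθ⟩,
    fun θ₁ hθ₁ θ₂ hθ₂ => ?_⟩
  · have := hGeq p₀.2 hθ₀U
    rw [hG0] at this
    exact (congrArg Prod.fst this).symm
  · exact (convex_ball _ _).norm_image_sub_le_of_norm_fderiv_le hgdiff hbound hθ₂ hθ₁


/-- Implicit-function-theorem smoothness of the optimal adversarial
example on the boundary of the `L₂` feasible region. If `∇_x̃ J` is `C¹` on an open
set `V`, every singular value of the bordered Hessian `∇²_x̃ J` is at least `c > 0`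
on `V` (formalized as `c‖v‖ ≤ ‖∇²_x̃ J v‖` for all `v`), and the mixed derivative
`∂_θ ∇_x̃ J` has operator norm at most `C_θx` on `V`, then around any KKT point
`∇_x̃ J(μ*, x'*, θ₀) = 0` with `‖x'* − x‖₂ = ε` there are an open convex
neighborhood `U` of `θ₀` and `C¹` maps `μ, x'` on `U` with `μ(θ₀) = μ*`,
`x'(θ₀) = x'*`, `∇_x̃ J(μ(θ), x'(θ), θ) = 0` on `U`, and `x'` is
`(C_θx/c)`-Lipschitz on `U`. -/
theorem boundary_adv_example_implicit_lipschitz (d m : ℕ)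
    (ℓ : EuclideanSpace ℝ (Fin d) → EuclideanSpace ℝ (Fin m) → ℝ)
    (x : EuclideanSpace ℝ (Fin d)) (ε : ℝ) (hε : 0 < ε)
    (V : Set (WithLp 2 (ℝ × EuclideanSpace ℝ (Fin d)) × EuclideanSpace ℝ (Fin m)))
    (hV : IsOpen V)
    (hsmooth : ContDiffOn ℝ 1
      (fun p : WithLp 2 (ℝ × EuclideanSpace ℝ (Fin d)) × EuclideanSpace ℝ (Fin m) =>
        advLagrangianGrad d m ℓ x ε p.1 p.2) V)
    (c Cθx : ℝ) (hc : 0 < c) (hCθx : 0 ≤ Cθx)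
    (hsing : ∀ p ∈ V, ∀ v : WithLp 2 (ℝ × EuclideanSpace ℝ (Fin d)),
      c * ‖v‖ ≤ ‖(fderiv ℝ (fun xt => advLagrangianGrad d m ℓ x ε xt p.2) p.1) v‖)
    (hmix : ∀ p ∈ V,
      ‖fderiv ℝ (fun θ => advLagrangianGrad d m ℓ x ε p.1 θ) p.2‖ ≤ Cθx)
    (μstar : ℝ) (xstar : EuclideanSpace ℝ (Fin d)) (θ₀ : EuclideanSpace ℝ (Fin m))
    (hmem : ((WithLp.equiv 2 (ℝ × EuclideanSpace ℝ (Fin d))).symm (μstar, xstar), θ₀) ∈ V)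
    (hbdry : ‖xstar - x‖ = ε)
    (hKKT : advLagrangianGrad d m ℓ x ε
      ((WithLp.equiv 2 (ℝ × EuclideanSpace ℝ (Fin d))).symm (μstar, xstar)) θ₀ = 0) :
    ∃ U : Set (EuclideanSpace ℝ (Fin m)), IsOpen U ∧ Convex ℝ U ∧ θ₀ ∈ U ∧
      ∃ (μg : EuclideanSpace ℝ (Fin m) → ℝ)
        (xg : EuclideanSpace ℝ (Fin m) → EuclideanSpace ℝ (Fin d)),
        ContDiffOn ℝ 1 μg U ∧ ContDiffOn ℝ 1 xg U ∧
        μg θ₀ = μstar ∧ xg θ₀ = xstar ∧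
        (∀ θ ∈ U, advLagrangianGrad d m ℓ x ε
          ((WithLp.equiv 2 (ℝ × EuclideanSpace ℝ (Fin d))).symm (μg θ, xg θ)) θ = 0) ∧
        ∀ θ₁ ∈ U, ∀ θ₂ ∈ U, ‖xg θ₁ - xg θ₂‖ ≤ (Cθx / c) * ‖θ₁ - θ₂‖ := by
  obtain ⟨U, hUo, hUc, hθU, g, hg, hg0, hsol, hlip⟩ :=
    implicit_lipschitz_aux (E := WithLp 2 (ℝ × EuclideanSpace ℝ (Fin d)))
      (F := EuclideanSpace ℝ (Fin m))
      (fun p => advLagrangianGrad d m ℓ x ε p.1 p.2) V hV hsmooth c Cθx hc hCθx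
      (fun p hp v => hsing p hp v) (fun p hp => hmix p hp)
      (((WithLp.equiv 2 (ℝ × EuclideanSpace ℝ (Fin d))).symm (μstar, xstar), θ₀)) hmem hKKT
  have hg0' : g θ₀ = (WithLp.equiv 2 (ℝ × EuclideanSpace ℝ (Fin d))).symm (μstar, xstar) := hg0
  set e := WithLp.prodContinuousLinearEquiv 2 ℝ ℝ (EuclideanSpace ℝ (Fin d)) with hedef
  refine ⟨U, hUo, hUc, hθU, fun θ => (g θ).fst, fun θ => (g θ).snd, ?_, ?_, ?_, ?_, ?_, ?_⟩
  · exact ((ContinuousLinearMap.fst ℝ ℝ (EuclideanSpace ℝ (Fin d))).comp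
      e.toContinuousLinearMap).contDiff.comp_contDiffOn hg
  · exact ((ContinuousLinearMap.snd ℝ ℝ (EuclideanSpace ℝ (Fin d))).comp
      e.toContinuousLinearMap).contDiff.comp_contDiffOn hg
  · show (g θ₀).fst = μstar
    rw [hg0']; exact WithLp.toLp_fst (μstar, xstar)
  · show (g θ₀).snd = xstar
    rw [hg0']; exact WithLp.toLp_snd (μstar, xstar)
  · intro θ hθ
    have h := (hsol θ hθ).2
    exact h
  · intro θ₁ hθ₁ θ₂ hθ₂
    have hsub : (g θ₁).snd - (g θ₂).snd = (g θ₁ - g θ₂).snd := rfl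
    have hle : ‖(g θ₁ - g θ₂).snd‖ ≤ ‖g θ₁ - g θ₂‖ := by
      have h := WithLp.prod_norm_sq_eq_of_L2 (g θ₁ - g θ₂)
      nlinarith [norm_nonneg (g θ₁ - g θ₂), norm_nonneg (g θ₁ - g θ₂).fst,
        norm_nonneg (g θ₁ - g θ₂).snd]
    calc ‖(g θ₁).snd - (g θ₂).snd‖ = ‖(g θ₁ - g θ₂).snd‖ := by rw [hsub]
      _ ≤ ‖g θ₁ - g θ₂‖ := hle
      _ ≤ (Cθx / c) * ‖θ₁ - θ₂‖ := hlip θ₁ hθ₁ θ₂ hθ₂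
end
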